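/- Let L be a regular language over A accepted by a DFA with n states, and let α, β ∈ A*. Then there exist q ∈ ℕ and finite sets P, S ⊆ {0, 1, ..., n} such that the intersection of {(αβ)^m·α : m ≥ 1} with L equals {(αβ)^s·α : s ∈ S} ∪ {(αβ)^{qμ+p}·α : μ ∈ ℕ, p ∈ P}. -/
import Mathlib


/-- Intersection of `(αβ)^+ α` with a regular language accepted by a DFA with `n` states:
described by finitely many exponents `S` plus arithmetic progressions `qμ + p`, `p ∈ P`,
with `S, P ⊆ {0,…,n}`. -/
theorem stmt10 {A Q : Type*} [Fintype Q] (M : DFA A Q) (n : ℕ) (hn : Fintype.card Q = n)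
    (α β : List A) :
    ∃ (q : ℕ) (P S : Finset ℕ), (∀ s ∈ S, s ≤ n) ∧ (∀ p ∈ P, p ≤ n) ∧
      ∀ w : List A,
        ((∃ m : ℕ, 1 ≤ m ∧ w = (List.replicate m (α ++ β)).flatten ++ α) ∧ w ∈ M.accepts) ↔
          ((∃ s ∈ S, w = (List.replicate s (α ++ β)).flatten ++ α) ∨
            (∃ μ : ℕ, ∃ p ∈ P, w = (List.replicate (q * μ + p) (α ++ β)).flatten ++ α)) := by
  classical
  set u := α ++ β with hu
  set g : ℕ → Q := fun m => M.eval (List.replicate m u).flatten with hg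
  have hgadd : ∀ m k : ℕ, g (m + k) = M.evalFrom (g m) (List.replicate k u).flatten := by
    intro m k
    simp only [hg, DFA.eval, List.replicate_add, List.flatten_append,
      DFA.evalFrom_of_append]
  -- pigeonhole
  obtain ⟨a, b, hab, hfab⟩ := Fintype.exists_ne_map_eq_of_card_lt
    (fun k : Fin (n + 1) => g (k + 1)) (by simp [hn])
  have key : ∃ i q : ℕ, 1 ≤ i ∧ 1 ≤ q ∧ i + q ≤ n + 1 ∧ g (i + q) = g i := by
    rcases lt_or_gt_of_ne hab with h | h
    · refine ⟨a + 1, b - a, by omega, ?_, ?_, ?_⟩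
      · have : (a : ℕ) < b := h
        omega
      · have : (b : ℕ) ≤ n := Nat.lt_succ_iff.mp b.isLt
        have : (a : ℕ) < b := h
        omega
      · have hab' : (a : ℕ) < b := h
        have : (a : ℕ) + 1 + ((b : ℕ) - a) = (b : ℕ) + 1 := by omega
        rw [this, ← hfab]
    · refine ⟨b + 1, a - b, by omega, ?_, ?_, ?_⟩
      · have : (b : ℕ) < a := h
        omega
      · have : (a : ℕ) ≤ n := Nat.lt_succ_iff.mp a.isLt
        have : (b : ℕ) < a := h
        omega
      · have hab' : (b : ℕ) < a := h
        have : (b : ℕ) + 1 + ((a : ℕ) - b) = (a : ℕ) + 1 := by omega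
        rw [this, hfab]
  obtain ⟨i, q, hi1, hq1, hiqn, hper⟩ := key
  have hper' : ∀ m, i ≤ m → g (m + q) = g m := by
    intro m hm
    obtain ⟨r, rfl⟩ := Nat.exists_eq_add_of_le hm
    have h1 : i + r + q = (i + q) + r := by ring
    rw [h1, hgadd, hper, ← hgadd]
  have hpermul : ∀ m μ : ℕ, i ≤ m → g (m + q * μ) = g m := by
    intro m μ hm
    induction μ with
    | zero => simp
    | succ k ih =>
      have h1 : m + q * (k + 1) = (m + q * k) + q := by ring
      rw [h1, hper' _ (le_trans hm (Nat.le_add_right _ _)), ih]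
  have hacc : ∀ m : ℕ, ((List.replicate m u).flatten ++ α ∈ M.accepts ↔
      M.evalFrom (g m) α ∈ M.accept) := by
    intro m
    rw [DFA.mem_accepts]
    simp only [hg, DFA.eval, DFA.evalFrom_of_append]
  refine ⟨q, (Finset.Ico i (i + q)).filter (fun p => M.evalFrom (g p) α ∈ M.accept),
    (Finset.Icc 1 n).filter (fun s => M.evalFrom (g s) α ∈ M.accept), ?_, ?_, ?_⟩
  · intro s hs
    simp only [Finset.mem_filter, Finset.mem_Icc] at hs
    exact hs.1.2
  · intro p hp
    simp only [Finset.mem_filter, Finset.mem_Ico] at hp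
    omega
  · intro w
    constructor
    · rintro ⟨⟨m, hm1, rfl⟩, hw⟩
      have hcm := (hacc m).mp hw
      by_cases hmn : m ≤ n
      · left
        exact ⟨m, by simp only [Finset.mem_filter, Finset.mem_Icc]; exact ⟨⟨hm1, hmn⟩, hcm⟩, rfl⟩
      · right
        have hd := Nat.div_add_mod (m - i) q
        set μ := (m - i) / q with hμ
        set r := (m - i) % q with hr
        have hrq : r < q := Nat.mod_lt _ hq1
        have him : i ≤ m := by omega
        have hqd : q * μ ≤ m - i := by omega
        have hmeq : m = (i + r) + q * μ := by omega
        have hgp : g (i + r) = g m := by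
          rw [hmeq, hpermul _ _ (Nat.le_add_right _ _)]
        refine ⟨μ, i + r, ?_, ?_⟩
        · simp only [Finset.mem_filter, Finset.mem_Ico]
          refine ⟨⟨Nat.le_add_right _ _, by omega⟩, ?_⟩
          rw [hgp]; exact hcm
        · have hfix : q * μ + (i + r) = m := by omega
          rw [hfix]
    · rintro (⟨s, hs, rfl⟩ | ⟨μ, p, hp, rfl⟩)
      · simp only [Finset.mem_filter, Finset.mem_Icc] at hs
        exact ⟨⟨s, hs.1.1, rfl⟩, (hacc s).mpr hs.2⟩
      · simp only [Finset.mem_filter, Finset.mem_Ico] at hp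
        refine ⟨⟨q * μ + p, by omega, rfl⟩, (hacc _).mpr ?_⟩
        have : g (q * μ + p) = g p := by
          rw [Nat.add_comm, hpermul _ _ hp.1.1]
        rw [this]
        exact hp.2
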